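/- For every t with 2 ≤ t ≤ k and each degree d ≥ 0, the u^d-coefficient of a_{k,(1,t),ℓ}(u) is eventually constant as ℓ → ∞, and the resulting limit formal power series α_{k,(1,t)}(u) ∈ ℚ[[u]] satisfies α_{k,(1,t)}(u) = (−(q−1)q^{2t−1}uᵗ − Σ_{i=t}^{k}(q−1)²q^{3i−t+1}u^{3i−2t+3}) · (1 − Σ_{i=1}^{k}(q−1)q^{3i}u^{3i})⁻¹, where the inverse is taken in ℚ[[u]]. -/

import Mathlib

open Polynomial in
/-- `aP q k ℓ s t = a_{k,(s,t),ℓ}(u) ∈ ℚ[u]` (with the junk value `0` at `ℓ = 0`). -/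
noncomputable def aP (q k : ℕ) : ℕ → ℕ → ℕ → ℚ[X]
  | 0, _, _ => 0
  | 1, s, t =>
      if s = 1 ∧ t = 1 then -C ((q : ℚ) ^ 2 - 1) * X
      else if s = t then -C ((q : ℚ) - 1) * X
      else 0
  | ℓ + 2, s, t =>
      if s = 1 ∧ t = 1 then
        -C ((q : ℚ) ^ 2 - 1) * X +
          ∑ i ∈ Finset.Icc 1 k,
            C (((q : ℚ) - 1) * (q : ℚ) ^ (2 * i + 1)) * X ^ (i + 2) * aP q k (ℓ + 1) i 1
      else if s = 1 then
        -C (((q : ℚ) - 1) * (q : ℚ) ^ (2 * t - 1)) * X ^ t +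
          ∑ i ∈ Finset.Icc 1 k,
            C (((q : ℚ) - 1) * (q : ℚ) ^ (2 * i + 1)) * X ^ (i + 2) * aP q k (ℓ + 1) i t
      else if s = t then
        -C ((q : ℚ) - 1) * X + C (q : ℚ) * X ^ 2 * aP q k (ℓ + 1) (s - 1) t
      else C (q : ℚ) * X ^ 2 * aP q k (ℓ + 1) (s - 1) t

namespace APaux

open PowerSeries

/-- The denominator sum. -/
noncomputable def S (q k : ℕ) : ℚ⟦X⟧ :=
  ∑ i ∈ Finset.Icc 1 k, C (R := ℚ) (((q : ℚ) - 1) * (q : ℚ) ^ (3 * i)) * X ^ (3 * i)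

/-- The numerator. -/
noncomputable def num (q k t : ℕ) : ℚ⟦X⟧ :=
  -(C (R := ℚ) (((q : ℚ) - 1) * (q : ℚ) ^ (2 * t - 1))) * X ^ t -
    ∑ i ∈ Finset.Icc t k,
      C (R := ℚ) (((q : ℚ) - 1) ^ 2 * (q : ℚ) ^ (3 * i - t + 1)) * X ^ (3 * i - 2 * t + 3)

/-- The limit power series. -/
noncomputable def α (q k t : ℕ) : ℚ⟦X⟧ := num q k t * (1 - S q k)⁻¹

/-- The limit of `a_{(s,t),ℓ}` for general `s`. -/
noncomputable def A (q k t s : ℕ) : ℚ⟦X⟧ :=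
  (C (R := ℚ) (q : ℚ) * X ^ 2) ^ (s - 1) * α q k t +
    (if t ≤ s then (C (R := ℚ) (q : ℚ) * X ^ 2) ^ (s - t) * (-(C (R := ℚ) ((q : ℚ) - 1)) * X) else 0)

lemma constS (q k : ℕ) : constantCoeff (R := ℚ) (1 - S q k) = 1 := by
  have h : constantCoeff (R := ℚ) (S q k) = 0 := by
    rw [S, map_sum]
    refine Finset.sum_eq_zero fun i hi => ?_
    simp only [Finset.mem_Icc] at hi
    rw [map_mul, map_pow, constantCoeff_X, zero_pow (by omega : 3 * i ≠ 0), mul_zero]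
  simp [h]

lemma unit_mul (q k : ℕ) : (1 - S q k) * (1 - S q k)⁻¹ = 1 :=
  PowerSeries.mul_inv_cancel _ (by rw [constS]; norm_num)

lemma α_mul (q k t : ℕ) : α q k t * (1 - S q k) = num q k t := by
  rw [α, mul_assoc, mul_comm ((1 - S q k)⁻¹), unit_mul, mul_one]

lemma CqX_pow (q : ℕ) (n : ℕ) :
    (C (R := ℚ) (q : ℚ) * X ^ 2) ^ n = C (R := ℚ) ((q : ℚ) ^ n) * X ^ (2 * n) := by
  rw [mul_pow, ← map_pow, ← pow_mul]

lemma A_one (q k t : ℕ) (ht2 : 2 ≤ t) : A q k t 1 = α q k t := by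
  rw [A, if_neg (by omega)]
  simp

/-- the fixed point equation -/
lemma fixed (q k t : ℕ) (ht2 : 2 ≤ t) (htk : t ≤ k) :
    α q k t =
      -(C (R := ℚ) (((q : ℚ) - 1) * (q : ℚ) ^ (2 * t - 1))) * X ^ t +
        ∑ i ∈ Finset.Icc 1 k,
          C (R := ℚ) (((q : ℚ) - 1) * (q : ℚ) ^ (2 * i + 1)) * X ^ (i + 2) * A q k t i := by
  have h1 : ∀ i ∈ Finset.Icc 1 k,
      C (R := ℚ) (((q : ℚ) - 1) * (q : ℚ) ^ (2 * i + 1)) * X ^ (i + 2) * A q k t i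
        = C (R := ℚ) (((q : ℚ) - 1) * (q : ℚ) ^ (3 * i)) * X ^ (3 * i) * α q k t
          + (if t ≤ i then
              -(C (R := ℚ) (((q : ℚ) - 1) ^ 2 * (q : ℚ) ^ (3 * i - t + 1)) * X ^ (3 * i - 2 * t + 3))
            else 0) := by
    intro i hi
    simp only [Finset.mem_Icc] at hi
    rw [A, CqX_pow, CqX_pow]
    have hq1 : (q : ℚ) ^ (3 * i) = (q : ℚ) ^ (2 * i + 1) * (q : ℚ) ^ (i - 1) := by
      rw [← pow_add]; congr 1; omega
    have hx1 : (X : ℚ⟦X⟧) ^ (3 * i) = X ^ (i + 2) * X ^ (2 * (i - 1)) := by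
      rw [← pow_add]; congr 1; omega
    by_cases hti : t ≤ i
    · have hq2 : (q : ℚ) ^ (3 * i - t + 1) = (q : ℚ) ^ (2 * i + 1) * (q : ℚ) ^ (i - t) := by
        rw [← pow_add]; congr 1; omega
      have hx2 : (X : ℚ⟦X⟧) ^ (3 * i - 2 * t + 3)
          = X ^ (i + 2) * X ^ (2 * (i - t)) * X := by
        rw [← pow_add, ← pow_succ]; congr 1; omega
      rw [if_pos hti, if_pos hti, hq1, hq2, hx1, hx2]
      simp only [map_mul, map_pow]
      ring
    · rw [if_neg hti, if_neg hti, hq1, hx1]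
      simp only [map_mul]
      ring
  rw [Finset.sum_congr rfl h1, Finset.sum_add_distrib, ← Finset.sum_mul]
  have h2 : ∑ i ∈ Finset.Icc 1 k,
      (if t ≤ i then
          -(C (R := ℚ) (((q : ℚ) - 1) ^ 2 * (q : ℚ) ^ (3 * i - t + 1)) * X ^ (3 * i - 2 * t + 3))
        else 0)
      = -∑ i ∈ Finset.Icc t k,
          C (R := ℚ) (((q : ℚ) - 1) ^ 2 * (q : ℚ) ^ (3 * i - t + 1)) * X ^ (3 * i - 2 * t + 3) := by
    rw [← Finset.sum_filter]
    have : (Finset.Icc 1 k).filter (fun i => t ≤ i) = Finset.Icc t k := by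
      ext x
      simp only [Finset.mem_filter, Finset.mem_Icc]
      omega
    rw [this, Finset.sum_neg_distrib]
  rw [h2]
  have hm := α_mul q k t
  rw [num] at hm
  rw [← S]
  linear_combination hm

lemma A_rec (q k t : ℕ) (ht2 : 2 ≤ t) (s : ℕ) (hs : 2 ≤ s) :
    A q k t s = (if s = t then -(C (R := ℚ) ((q : ℚ) - 1)) * X else 0) +
      C (R := ℚ) (q : ℚ) * X ^ 2 * A q k t (s - 1) := by
  rw [A, A]
  have p1 : (C (R := ℚ) (q : ℚ) * X ^ 2 : ℚ⟦X⟧) ^ (s - 1)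
      = (C (R := ℚ) (q : ℚ) * X ^ 2) * (C (R := ℚ) (q : ℚ) * X ^ 2) ^ (s - 1 - 1) := by
    conv_lhs => rw [show s - 1 = (s - 1 - 1) + 1 by omega]
    rw [pow_succ]; ring
  rcases lt_trichotomy s t with h | h | h
  · rw [if_neg (by omega : ¬ t ≤ s), if_neg (by omega : ¬ t ≤ s - 1),
      if_neg (by omega : ¬ s = t), p1]
    ring
  · rw [if_pos (by omega : t ≤ s), if_neg (by omega : ¬ t ≤ s - 1),
      if_pos h, show s - t = 0 by omega, pow_zero, p1, h]
    ring
  · have p2 : (C (R := ℚ) (q : ℚ) * X ^ 2 : ℚ⟦X⟧) ^ (s - t)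
        = (C (R := ℚ) (q : ℚ) * X ^ 2) * (C (R := ℚ) (q : ℚ) * X ^ 2) ^ (s - 1 - t) := by
      conv_lhs => rw [show s - t = (s - 1 - t) + 1 by omega]
      rw [pow_succ]; ring
    rw [if_pos (by omega : t ≤ s), if_pos (by omega : t ≤ s - 1),
      if_neg (by omega : ¬ s = t), p1, p2]
    ring

lemma X2_dvd_CX (a : ℚ) (m : ℕ) (hm : 2 ≤ m) : (X : ℚ⟦X⟧) ^ 2 ∣ C (R := ℚ) a * X ^ m :=
  Dvd.dvd.mul_left (pow_dvd_pow X hm) _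

lemma X2_dvd_num (q k t : ℕ) (ht2 : 2 ≤ t) : (X : ℚ⟦X⟧) ^ 2 ∣ num q k t := by
  rw [num]
  refine dvd_sub ?_ (Finset.dvd_sum fun i hi => ?_)
  · rw [neg_mul]
    exact (X2_dvd_CX _ _ ht2).neg_right
  · simp only [Finset.mem_Icc] at hi
    exact X2_dvd_CX _ _ (by omega)

lemma X2_dvd_α (q k t : ℕ) (ht2 : 2 ≤ t) : (X : ℚ⟦X⟧) ^ 2 ∣ α q k t :=
  (X2_dvd_num q k t ht2).mul_right _

lemma base (q k t : ℕ) (ht2 : 2 ≤ t) (s : ℕ) (hs : 1 ≤ s) :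
    (X : ℚ⟦X⟧) ^ 2 ∣ A q k t s - (aP q k 1 s t : ℚ⟦X⟧) := by
  have hP : aP q k 1 s t
      = if s = t then -(Polynomial.C ((q : ℚ) - 1)) * Polynomial.X else 0 := by
    rw [aP.eq_2, if_neg (by omega : ¬ (s = 1 ∧ t = 1))]
  rw [hP, A]
  rcases lt_trichotomy s t with h | h | h
  · rw [if_neg (by omega : ¬ t ≤ s), if_neg (by omega : ¬ s = t)]
    push_cast
    rw [add_zero, sub_zero]
    exact ((X2_dvd_α q k t ht2).mul_left _)
  · rw [if_pos (by omega : t ≤ s), if_pos h, show s - t = 0 by omega, pow_zero, one_mul]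
    push_cast
    rw [add_sub_assoc]
    have : (-(C (R := ℚ) ((q : ℚ) - 1)) * X - -(C (R := ℚ) ((q : ℚ) - 1)) * X : ℚ⟦X⟧) = 0 := by ring
    rw [this, add_zero]
    exact ((X2_dvd_α q k t ht2).mul_left _)
  · rw [if_pos (by omega : t ≤ s), if_neg (by omega : ¬ s = t)]
    push_cast
    rw [sub_zero]
    refine dvd_add ((X2_dvd_α q k t ht2).mul_left _) ?_
    have p2 : (C (R := ℚ) (q : ℚ) * X ^ 2 : ℚ⟦X⟧) ^ (s - t)
        = (C (R := ℚ) (q : ℚ) * X ^ 2) * (C (R := ℚ) (q : ℚ) * X ^ 2) ^ (s - t - 1) := by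
      conv_lhs => rw [show s - t = (s - t - 1) + 1 by omega]
      rw [pow_succ]; ring
    rw [p2]
    refine Dvd.dvd.mul_right (Dvd.dvd.mul_right ?_ _) _
    exact Dvd.dvd.mul_left dvd_rfl _

lemma coe_sum (s : Finset ℕ) (f : ℕ → Polynomial ℚ) :
    ((∑ i ∈ s, f i : Polynomial ℚ) : ℚ⟦X⟧) = ∑ i ∈ s, (f i : ℚ⟦X⟧) :=
  map_sum Polynomial.coeToPowerSeries.ringHom f s

lemma dvd_helper (a c : ℚ⟦X⟧) (u v w : ℕ) (h : w ≤ u + v) :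
    (X : ℚ⟦X⟧) ^ w ∣ a * X ^ u * (X ^ v * c) := by
  have h1 : (X : ℚ⟦X⟧) ^ w ∣ X ^ u * X ^ v := by
    rw [← pow_add]; exact pow_dvd_pow _ h
  exact h1.trans ⟨a * c, by ring⟩

lemma main (q k t : ℕ) (ht2 : 2 ≤ t) (htk : t ≤ k) :
    ∀ ℓ, 1 ≤ ℓ → ∀ s, 1 ≤ s →
      (X : ℚ⟦X⟧) ^ (ℓ + 1) ∣ A q k t s - (aP q k ℓ s t : ℚ⟦X⟧) := by
  intro ℓ
  induction ℓ with
  | zero => omega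
  | succ n ih =>
    intro _ s hs
    rcases Nat.eq_zero_or_pos n with hn | hn
    · subst hn
      exact base q k t ht2 s hs
    · -- n ≥ 1, so n + 1 = (n - 1) + 2
      obtain ⟨m, rfl⟩ : ∃ m, n = m + 1 := ⟨n - 1, by omega⟩
      rcases Nat.eq_or_lt_of_le hs with hs1 | hs2
      · -- s = 1
        subst hs1
        have hP : aP q k (m + 2) 1 t
            = -Polynomial.C (((q : ℚ) - 1) * (q : ℚ) ^ (2 * t - 1)) * Polynomial.X ^ t +
              ∑ i ∈ Finset.Icc 1 k,
                Polynomial.C (((q : ℚ) - 1) * (q : ℚ) ^ (2 * i + 1)) * Polynomial.X ^ (i + 2) *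
                  aP q k (m + 1) i t := by
          rw [aP.eq_3, if_neg (by omega : ¬ (1 = 1 ∧ t = 1)), if_pos rfl]
        have hrw : A q k t 1 - (aP q k (m + 1 + 1) 1 t : ℚ⟦X⟧)
            = ∑ i ∈ Finset.Icc 1 k,
                C (R := ℚ) (((q : ℚ) - 1) * (q : ℚ) ^ (2 * i + 1)) * X ^ (i + 2) *
                  (A q k t i - (aP q k (m + 1) i t : ℚ⟦X⟧)) := by
          rw [A_one q k t ht2, show m + 1 + 1 = m + 2 from rfl, hP]
          push_cast [coe_sum]
          rw [fixed q k t ht2 htk]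
          simp only [mul_sub]
          rw [Finset.sum_sub_distrib]
          ring
        rw [hrw]
        refine Finset.dvd_sum fun i hi => ?_
        simp only [Finset.mem_Icc] at hi
        obtain ⟨c, hc⟩ := ih (by omega) i (by omega)
        rw [hc]
        exact dvd_helper _ _ _ _ _ (by omega)
      · -- s ≥ 2
        have hP : aP q k (m + 2) s t
            = (if s = t then -(Polynomial.C ((q : ℚ) - 1)) * Polynomial.X else 0) +
              Polynomial.C (q : ℚ) * Polynomial.X ^ 2 * aP q k (m + 1) (s - 1) t := by
          rw [aP.eq_3, if_neg (by omega : ¬ (s = 1 ∧ t = 1)), if_neg (by omega : ¬ s = 1)]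
          split_ifs with h
          · rfl
          · rw [zero_add]
        obtain ⟨c, hc⟩ := ih (by omega) (s - 1) (by omega)
        have hrw : A q k t s - (aP q k (m + 1 + 1) s t : ℚ⟦X⟧)
            = C (R := ℚ) (q : ℚ) * X ^ 2 * (A q k t (s - 1) - (aP q k (m + 1) (s - 1) t : ℚ⟦X⟧)) := by
          rw [A_rec q k t ht2 s (by omega), show m + 1 + 1 = m + 2 from rfl, hP]
          by_cases hst : s = t
          · rw [if_pos hst, if_pos hst]
            push_cast
            ring
          · rw [if_neg hst, if_neg hst]
            push_cast
            ring
        rw [hrw, hc]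
        exact dvd_helper _ _ _ _ _ (by omega)

end APaux

open PowerSeries in
/-- For each `2 ≤ t ≤ k` and each degree `d`, the `u^d`-coefficient of `a_{k,(1,t),ℓ}(u)`
is eventually constant as `ℓ → ∞`, and the limit power series is
`α_{k,(1,t)}(u) = (−(q−1)q^{2t−1}uᵗ − Σ_{i=t}^{k}(q−1)²q^{3i−t+1}u^{3i−2t+3})
  · (1 − Σ_{i=1}^{k}(q−1)q^{3i}u^{3i})⁻¹` in `ℚ[[u]]`. -/
theorem aP_one_t_tendsto (q k : ℕ) (hq : 2 ≤ q) (hk : 1 ≤ k) (t : ℕ) (ht2 : 2 ≤ t)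
    (htk : t ≤ k) :
    ∀ d : ℕ, ∃ L : ℕ, ∀ ℓ : ℕ, L ≤ ℓ → 1 ≤ ℓ →
      (aP q k ℓ 1 t).coeff d =
        PowerSeries.coeff (R := ℚ) d
          ((-(C (R := ℚ) (((q : ℚ) - 1) * (q : ℚ) ^ (2 * t - 1))) * X ^ t -
              ∑ i ∈ Finset.Icc t k,
                C (R := ℚ) (((q : ℚ) - 1) ^ 2 * (q : ℚ) ^ (3 * i - t + 1)) * X ^ (3 * i - 2 * t + 3)) *
            (1 - ∑ i ∈ Finset.Icc 1 k,
                C (R := ℚ) (((q : ℚ) - 1) * (q : ℚ) ^ (3 * i)) * X ^ (3 * i))⁻¹) := by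
  intro d
  refine ⟨d + 1, fun ℓ hℓ hℓ1 => ?_⟩
  have h := APaux.main q k t ht2 htk ℓ hℓ1 1 le_rfl
  rw [APaux.A_one q k t ht2, PowerSeries.X_pow_dvd_iff] at h
  have h0 := h d (by omega)
  rw [map_sub, sub_eq_zero, Polynomial.coeff_coe] at h0
  rw [← h0, APaux.α, APaux.num, APaux.S]
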